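/- arXiv:1601.00207 — 3 statements merged into one kernel-verified Lean document; each statement's English description precedes it below -/
import Mathlib

section
/- Suppose 1 ∈ U and U contains elements u, v, w such that 1, u, v, w are pairwise non-±-equal. Then for every x ∈ R(U) and every p ∈ P, the product p·x lies in R(U); consequently the subring ℤ[P] of ℝ generated by P satisfies ℤ[P] ⊆ R(U). -/
set_option maxHeartbeats 1000000


open Complex

/-- The bracket `[x,y] = x * conj y - y * conj x`. -/
noncomputable def brkt (x y : ℂ) : ℂ := x * (starRingEnd ℂ) y - y * (starRingEnd ℂ) x

/-- `lineInt α β p q` is the intersection point `I_{α,β}(p,q)` of the line through `p`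
with direction `α` and the line through `q` with direction `β` (for unit `α ≠ ±β`),
given by the formula of Buhler et al. -/
noncomputable def lineInt (α β p q : ℂ) : ℂ :=
  brkt α p / brkt α β * β + brkt β q / brkt β α * α

/-- The sets `S n` in the inductive construction. -/
def stepSet (U : Set ℂ) : ℕ → Set ℂ
  | 0 => {0, 1}
  | n + 1 => {z | ∃ α ∈ U, ∃ β ∈ U, α ≠ β ∧ α ≠ -β ∧
      ∃ p ∈ stepSet U n, ∃ q ∈ stepSet U n, z = lineInt α β p q}

/-- `RU U = ⋃ n, S n`. -/
def RU (U : Set ℂ) : Set ℂ := ⋃ n, stepSet U n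

/-- Elementary monomials of `U`. -/
def IsElem (U : Set ℂ) (z : ℂ) : Prop :=
  ∃ α ∈ U, ∃ β ∈ U, α ≠ β ∧ α ≠ -β ∧ z = lineInt α β 0 1

/-- Monomials of `U`, defined inductively. -/
inductive IsMonomial (U : Set ℂ) : ℂ → Prop
  | elementary (α β : ℂ) (hα : α ∈ U) (hβ : β ∈ U) (h1 : α ≠ β) (h2 : α ≠ -β) :
      IsMonomial U (lineInt α β 0 1)
  | step (α β m : ℂ) (hα : α ∈ U) (hβ : β ∈ U) (h1 : α ≠ β) (h2 : α ≠ -β)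
      (hm : IsMonomial U m) : IsMonomial U (lineInt α β 0 m)

/-- `P`: the real numbers arising as length-two monomials `I_{γ,δ}(0,z)` on the real axis. -/
def projSet (U : Set ℂ) : Set ℝ :=
  {r | ∃ γ ∈ U, ∃ δ ∈ U, γ ≠ δ ∧ γ ≠ -δ ∧ ∃ z, IsElem U z ∧ (r : ℂ) = lineInt γ δ 0 z}

/-- `m` is a `ℤ[P]`-linear combination of elementary monomials of `U`. -/
def IsZPComb (U : Set ℂ) (m : ℂ) : Prop :=
  ∃ (n : ℕ) (c : Fin n → ℝ) (z : Fin n → ℂ),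
    (∀ i, c i ∈ Subring.closure (projSet U)) ∧ (∀ i, IsElem U (z i)) ∧
    m = ∑ i, (c i : ℂ) * z i

lemma brkt_conj (x y : ℂ) : (starRingEnd ℂ) (brkt x y) = - brkt x y := by
  simp only [brkt, map_sub, map_mul, Complex.conj_conj]; ring

lemma brkt_anti (x y : ℂ) : brkt y x = - brkt x y := by simp only [brkt]; ring

lemma brkt_self (x : ℂ) : brkt x x = 0 := by simp only [brkt]; ring

lemma sc_ratio (a b c d : ℂ) :
    (starRingEnd ℂ) (brkt a b / brkt c d) = brkt a b / brkt c d := by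
  rw [map_div₀, brkt_conj, brkt_conj, neg_div_neg_eq]

lemma brkt_comb_right (a x y c₁ c₂ : ℂ) (h₁ : (starRingEnd ℂ) c₁ = c₁)
    (h₂ : (starRingEnd ℂ) c₂ = c₂) :
    brkt a (c₁*x + c₂*y) = c₁ * brkt a x + c₂ * brkt a y := by
  simp only [brkt, map_add, map_mul, h₁, h₂]; ring

lemma brkt_comb_left (b x y c₁ c₂ : ℂ) (h₁ : (starRingEnd ℂ) c₁ = c₁)
    (h₂ : (starRingEnd ℂ) c₂ = c₂) :
    brkt (c₁*x + c₂*y) b = c₁ * brkt x b + c₂ * brkt y b := by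
  simp only [brkt, map_add, map_mul, h₁, h₂]; ring

lemma conj_of_unit {α : ℂ} (h : ‖α‖ = 1) : (starRingEnd ℂ) α = α⁻¹ :=
  (Complex.inv_eq_conj h).symm

lemma unit_ne_zero {α : ℂ} (h : ‖α‖ = 1) : α ≠ 0 := by
  intro h0; rw [h0] at h; simp at h

lemma brkt_ne_zero {α β : ℂ} (hα : ‖α‖ = 1) (hβ : ‖β‖ = 1)
    (h1 : α ≠ β) (h2 : α ≠ -β) : brkt α β ≠ 0 := by
  have ha0 := unit_ne_zero hα
  have hb0 := unit_ne_zero hβ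
  rw [brkt, conj_of_unit hα, conj_of_unit hβ]
  intro h0
  have : α * α = β * β := by field_simp at h0; linear_combination h0
  rcases mul_self_eq_mul_self_iff.mp this with h | h
  · exact h1 h
  · exact h2 h

/-- coordinates of a point in the basis (α, β) -/
lemma coords {α β : ℂ} (hab : brkt α β ≠ 0) (z : ℂ) :
    z = (brkt β z / brkt β α) * α + (brkt α z / brkt α β) * β := by
  have hba : brkt β α ≠ 0 := by rw [brkt_anti]; exact neg_ne_zero.mpr hab
  field_simp
  simp only [brkt]
  ring

lemma lineInt_self {α β : ℂ} (hab : brkt α β ≠ 0) (z : ℂ) : lineInt α β z z = z := by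
  have hba : brkt β α ≠ 0 := by rw [brkt_anti]; exact neg_ne_zero.mpr hab
  rw [lineInt]
  field_simp
  simp only [brkt]
  ring

lemma li_eval_ab {α β p q p₁ p₂ q₁ q₂ : ℂ} (hD : brkt α β ≠ 0)
    (hp₁ : (starRingEnd ℂ) p₁ = p₁) (hp₂ : (starRingEnd ℂ) p₂ = p₂)
    (hq₁ : (starRingEnd ℂ) q₁ = q₁) (hq₂ : (starRingEnd ℂ) q₂ = q₂)
    (hp : p = p₁*α + p₂*β) (hq : q = q₁*α + q₂*β) :
    lineInt α β p q = q₁*α + p₂*β := by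
  have e1 : brkt α p = p₂ * brkt α β := by
    rw [hp, brkt_comb_right _ _ _ _ _ hp₁ hp₂, brkt_self]; ring
  have e2 : brkt β q = -q₁ * brkt α β := by
    rw [hq, brkt_comb_right _ _ _ _ _ hq₁ hq₂, brkt_self, brkt_anti]; ring
  rw [lineInt, e1, e2, brkt_anti α β]
  field_simp
  ring

lemma li_eval_ac {α β γ p q g₁ g₂ p₁ p₂ q₁ q₂ : ℂ} (hD : brkt α β ≠ 0) (hg₂ : g₂ ≠ 0)
    (hcg₁ : (starRingEnd ℂ) g₁ = g₁) (hcg₂ : (starRingEnd ℂ) g₂ = g₂)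
    (hp₁ : (starRingEnd ℂ) p₁ = p₁) (hp₂ : (starRingEnd ℂ) p₂ = p₂)
    (hq₁ : (starRingEnd ℂ) q₁ = q₁) (hq₂ : (starRingEnd ℂ) q₂ = q₂)
    (hγ : γ = g₁*α + g₂*β) (hp : p = p₁*α + p₂*β) (hq : q = q₁*α + q₂*β) :
    lineInt α γ p q = (q₁ + g₁/g₂*(p₂ - q₂))*α + p₂*β := by
  have e1 : brkt α p = p₂ * brkt α β := by
    rw [hp, brkt_comb_right _ _ _ _ _ hp₁ hp₂, brkt_self]; ring
  have e2 : brkt α γ = g₂ * brkt α β := by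
    rw [hγ, brkt_comb_right _ _ _ _ _ hcg₁ hcg₂, brkt_self]; ring
  have e3 : brkt γ α = -(g₂ * brkt α β) := by rw [brkt_anti, e2]
  have e4 : brkt γ q = (g₁*q₂ - g₂*q₁) * brkt α β := by
    rw [hγ, hq, brkt_comb_left _ _ _ _ _ hcg₁ hcg₂,
      brkt_comb_right _ _ _ _ _ hq₁ hq₂, brkt_comb_right _ _ _ _ _ hq₁ hq₂,
      brkt_self, brkt_self, brkt_anti β α]
    ring
  rw [lineInt, e1, e2, e3, e4, hγ]
  field_simp
  ring

lemma li_eval_bc {α β γ p q g₁ g₂ p₁ p₂ q₁ q₂ : ℂ} (hD : brkt α β ≠ 0) (hg₁ : g₁ ≠ 0)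
    (hcg₁ : (starRingEnd ℂ) g₁ = g₁) (hcg₂ : (starRingEnd ℂ) g₂ = g₂)
    (hp₁ : (starRingEnd ℂ) p₁ = p₁) (hp₂ : (starRingEnd ℂ) p₂ = p₂)
    (hq₁ : (starRingEnd ℂ) q₁ = q₁) (hq₂ : (starRingEnd ℂ) q₂ = q₂)
    (hγ : γ = g₁*α + g₂*β) (hp : p = p₁*α + p₂*β) (hq : q = q₁*α + q₂*β) :
    lineInt β γ p q = p₁*α + (q₂ + g₂/g₁*(p₁ - q₁))*β := by
  have e1 : brkt β p = -(p₁ * brkt α β) := by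
    rw [hp, brkt_comb_right _ _ _ _ _ hp₁ hp₂, brkt_self, brkt_anti β α]; ring
  have e2 : brkt β γ = -(g₁ * brkt α β) := by
    rw [hγ, brkt_comb_right _ _ _ _ _ hcg₁ hcg₂, brkt_self, brkt_anti β α]; ring
  have e3 : brkt γ β = g₁ * brkt α β := by rw [brkt_anti, e2]; ring
  have e4 : brkt γ q = (g₁*q₂ - g₂*q₁) * brkt α β := by
    rw [hγ, hq, brkt_comb_left _ _ _ _ _ hcg₁ hcg₂,
      brkt_comb_right _ _ _ _ _ hq₁ hq₂, brkt_comb_right _ _ _ _ _ hq₁ hq₂,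
      brkt_self, brkt_self, brkt_anti β α]
    ring
  rw [lineInt, e1, e2, e3, e4, hγ]
  field_simp
  ring

lemma neg_identity {α β γ x g₁ g₂ x₁ x₂ : ℂ} (hD : brkt α β ≠ 0)
    (hg₁ : g₁ ≠ 0) (hg₂ : g₂ ≠ 0)
    (hcg₁ : (starRingEnd ℂ) g₁ = g₁) (hcg₂ : (starRingEnd ℂ) g₂ = g₂)
    (hcx₁ : (starRingEnd ℂ) x₁ = x₁) (hcx₂ : (starRingEnd ℂ) x₂ = x₂)
    (hγ : γ = g₁*α + g₂*β) (hx : x = x₁*α + x₂*β) :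
    lineInt α β (lineInt β γ 0 (lineInt α β 0 (lineInt α γ x 0)))
      (lineInt α γ 0 (lineInt α β (lineInt β γ x 0) 0)) = -x := by
  have hc0 : (starRingEnd ℂ) (0:ℂ) = 0 := map_zero _
  have h0 : (0:ℂ) = 0*α + 0*β := by ring
  set a1 : ℂ := 0 + g₁/g₂*(x₂ - 0) with ha1
  have hca1 : (starRingEnd ℂ) a1 = a1 := by
    simp only [ha1, map_add, map_sub, map_mul, map_div₀, map_zero, hcg₁, hcg₂, hcx₂]
  have ht1 : lineInt α γ x 0 = a1*α + x₂*β :=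
    li_eval_ac hD hg₂ hcg₁ hcg₂ hcx₁ hcx₂ hc0 hc0 hγ hx h0
  have ht2 : lineInt α β 0 (lineInt α γ x 0) = a1*α + 0*β :=
    li_eval_ab hD hc0 hc0 hca1 hcx₂ h0 ht1
  set c2 : ℂ := 0 + g₂/g₁*(0 - a1) with hc2def
  have hcc2 : (starRingEnd ℂ) c2 = c2 := by
    simp only [hc2def, map_add, map_sub, map_mul, map_div₀, map_zero, hcg₁, hcg₂, hca1]
  have ht3 : lineInt β γ 0 (lineInt α β 0 (lineInt α γ x 0)) = 0*α + c2*β :=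
    li_eval_bc hD hg₁ hcg₁ hcg₂ hc0 hc0 hca1 hc0 hγ h0 ht2
  set b1 : ℂ := 0 + g₂/g₁*(x₁ - 0) with hb1
  have hcb1 : (starRingEnd ℂ) b1 = b1 := by
    simp only [hb1, map_add, map_sub, map_mul, map_div₀, map_zero, hcg₁, hcg₂, hcx₁]
  have hs1 : lineInt β γ x 0 = x₁*α + b1*β :=
    li_eval_bc hD hg₁ hcg₁ hcg₂ hcx₁ hcx₂ hc0 hc0 hγ hx h0
  have hs2 : lineInt α β (lineInt β γ x 0) 0 = 0*α + b1*β :=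
    li_eval_ab hD hcx₁ hcb1 hc0 hc0 hs1 h0
  set c1 : ℂ := 0 + g₁/g₂*(0 - b1) with hc1def
  have hcc1 : (starRingEnd ℂ) c1 = c1 := by
    simp only [hc1def, map_add, map_sub, map_mul, map_div₀, map_zero, hcg₁, hcg₂, hcb1]
  have hs3 : lineInt α γ 0 (lineInt α β (lineInt β γ x 0) 0) = c1*α + 0*β :=
    li_eval_ac hD hg₂ hcg₁ hcg₂ hc0 hc0 hc0 hcb1 hγ h0 hs2
  have hfin : lineInt α β (lineInt β γ 0 (lineInt α β 0 (lineInt α γ x 0)))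
      (lineInt α γ 0 (lineInt α β (lineInt β γ x 0) 0)) = c1*α + c2*β :=
    li_eval_ab hD hc0 hcc2 hcc1 hc0 ht3 hs3
  rw [hfin, hx, hc1def, hc2def, ha1, hb1]
  field_simp
  ring

lemma add_identity {α β γ x y g₁ g₂ x₁ x₂ y₁ y₂ : ℂ} (hD : brkt α β ≠ 0)
    (hg₁ : g₁ ≠ 0) (hg₂ : g₂ ≠ 0)
    (hcg₁ : (starRingEnd ℂ) g₁ = g₁) (hcg₂ : (starRingEnd ℂ) g₂ = g₂)
    (hcx₁ : (starRingEnd ℂ) x₁ = x₁) (hcx₂ : (starRingEnd ℂ) x₂ = x₂)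
    (hcy₁ : (starRingEnd ℂ) y₁ = y₁) (hcy₂ : (starRingEnd ℂ) y₂ = y₂)
    (hγ : γ = g₁*α + g₂*β) (hx : x = x₁*α + x₂*β) (hy : y = y₁*α + y₂*β) :
    lineInt α β (lineInt β γ (lineInt α γ x (lineInt α β 0 x)) (lineInt α β y x))
      (lineInt α γ (lineInt β γ x (lineInt α β x 0)) (lineInt α β x y)) = x + y := by
  have hc0 : (starRingEnd ℂ) (0:ℂ) = 0 := map_zero _
  have h0 : (0:ℂ) = 0*α + 0*β := by ring
  -- s-branch
  have hM0 : lineInt α β x 0 = 0*α + x₂*β :=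
    li_eval_ab hD hcx₁ hcx₂ hc0 hc0 hx h0
  set b1 : ℂ := x₂ + g₂/g₁*(x₁ - 0) with hb1
  have hcb1 : (starRingEnd ℂ) b1 = b1 := by
    simp only [hb1, map_add, map_sub, map_mul, map_div₀, map_zero, hcg₁, hcg₂, hcx₁, hcx₂]
  have hB1 : lineInt β γ x (lineInt α β x 0) = x₁*α + b1*β :=
    li_eval_bc hD hg₁ hcg₁ hcg₂ hcx₁ hcx₂ hc0 hcx₂ hγ hx hM0
  have hMxy : lineInt α β x y = y₁*α + x₂*β :=
    li_eval_ab hD hcx₁ hcx₂ hcy₁ hcy₂ hx hy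
  set s1 : ℂ := y₁ + g₁/g₂*(b1 - x₂) with hs1def
  have hcs1 : (starRingEnd ℂ) s1 = s1 := by
    simp only [hs1def, map_add, map_sub, map_mul, map_div₀, hcg₁, hcg₂, hcy₁, hcb1, hcx₂]
  have hs : lineInt α γ (lineInt β γ x (lineInt α β x 0)) (lineInt α β x y)
      = s1*α + b1*β :=
    li_eval_ac hD hg₂ hcg₁ hcg₂ hcx₁ hcb1 hcy₁ hcx₂ hγ hB1 hMxy
  -- s'-branch
  have hM0' : lineInt α β 0 x = x₁*α + 0*β :=
    li_eval_ab hD hc0 hc0 hcx₁ hcx₂ h0 hx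
  set a1 : ℂ := x₁ + g₁/g₂*(x₂ - 0) with ha1
  have hca1 : (starRingEnd ℂ) a1 = a1 := by
    simp only [ha1, map_add, map_sub, map_mul, map_div₀, map_zero, hcg₁, hcg₂, hcx₁, hcx₂]
  have hA1 : lineInt α γ x (lineInt α β 0 x) = a1*α + x₂*β :=
    li_eval_ac hD hg₂ hcg₁ hcg₂ hcx₁ hcx₂ hcx₁ hc0 hγ hx hM0'
  have hMyx : lineInt α β y x = x₁*α + y₂*β :=
    li_eval_ab hD hcy₁ hcy₂ hcx₁ hcx₂ hy hx
  set s2 : ℂ := y₂ + g₂/g₁*(a1 - x₁) with hs2def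
  have hcs2 : (starRingEnd ℂ) s2 = s2 := by
    simp only [hs2def, map_add, map_sub, map_mul, map_div₀, hcg₁, hcg₂, hcy₂, hca1, hcx₁]
  have hsp : lineInt β γ (lineInt α γ x (lineInt α β 0 x)) (lineInt α β y x)
      = a1*α + s2*β :=
    li_eval_bc hD hg₁ hcg₁ hcg₂ hca1 hcx₂ hcx₁ hcy₂ hγ hA1 hMyx
  have hfin : lineInt α β (lineInt β γ (lineInt α γ x (lineInt α β 0 x)) (lineInt α β y x))
      (lineInt α γ (lineInt β γ x (lineInt α β x 0)) (lineInt α β x y)) = s1*α + s2*β :=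
    li_eval_ab hD hca1 hcs2 hcs1 hcb1 hsp hs
  rw [hfin, hx, hy, hs1def, hs2def, ha1, hb1]
  field_simp
  ring

lemma lineInt_smul (a b p q : ℂ) (c : ℝ) :
    lineInt a b ((c:ℂ)*p) ((c:ℂ)*q) = (c:ℂ) * lineInt a b p q := by
  simp only [lineInt, brkt, map_mul, Complex.conj_ofReal]
  ring

/-- if `1 ∈ U` and `U` contains `u, v, w` with `1, u, v, w` pairwise
non-±-equal, then `p·x ∈ R(U)` for every `p ∈ P` and `x ∈ R(U)`, and consequently
`ℤ[P] ⊆ R(U)`. -/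
theorem stmt10 (U : Set ℂ) (hU : ∀ z ∈ U, ‖z‖ = 1) (h1U : (1 : ℂ) ∈ U)
    (u v w : ℂ) (hu : u ∈ U) (hv : v ∈ U) (hw : w ∈ U)
    (hu1 : u ≠ 1) (hu1' : u ≠ -1) (hv1 : v ≠ 1) (hv1' : v ≠ -1)
    (hw1 : w ≠ 1) (hw1' : w ≠ -1)
    (huv : u ≠ v) (huv' : u ≠ -v) (huw : u ≠ w) (huw' : u ≠ -w)
    (hvw : v ≠ w) (hvw' : v ≠ -w) :
    (∀ p ∈ projSet U, ∀ x ∈ RU U, (p : ℂ) * x ∈ RU U) ∧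
      (∀ r : ℝ, r ∈ Subring.closure (projSet U) → (r : ℂ) ∈ RU U) := by
  -- basic nonvanishing facts
  have habs1 : ‖(1:ℂ)‖ = 1 := by simp
  have hb1u : brkt 1 u ≠ 0 :=
    brkt_ne_zero habs1 (hU u hu) (Ne.symm hu1) (fun h => hu1' (by linear_combination h))
  have hbuv : brkt u v ≠ 0 := brkt_ne_zero (hU u hu) (hU v hv) huv huv'
  have hbvu : brkt v u ≠ 0 :=
    brkt_ne_zero (hU v hv) (hU u hu) (Ne.symm huv) (fun h => huv' (by linear_combination h))
  have hbuw : brkt u w ≠ 0 := brkt_ne_zero (hU u hu) (hU w hw) huw huw'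
  have hbvw : brkt v w ≠ 0 := brkt_ne_zero (hU v hv) (hU w hw) hvw hvw'
  -- membership machinery
  have h0S : (0:ℂ) ∈ stepSet U 0 := Set.mem_insert _ _
  have h1S : (1:ℂ) ∈ stepSet U 0 := Set.mem_insert_of_mem _ rfl
  have mono : ∀ n, stepSet U n ⊆ stepSet U (n+1) := by
    intro n
    induction n with
    | zero =>
      intro z hz
      exact ⟨1, h1U, u, hu, Ne.symm hu1, fun h => hu1' (by linear_combination h),
        z, hz, z, hz, (lineInt_self hb1u z).symm⟩
    | succ n ih =>
      rintro z ⟨a, ha, b, hb, h1, h2, p, hp, q, hq, rfl⟩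
      exact ⟨a, ha, b, hb, h1, h2, p, ih hp, q, ih hq, rfl⟩
  have monole : ∀ m n, m ≤ n → stepSet U m ⊆ stepSet U n := by
    intro m n h
    induction h with
    | refl => exact subset_rfl
    | step _ ih => exact ih.trans (mono _)
  have h0RU : (0:ℂ) ∈ RU U := Set.mem_iUnion.mpr ⟨0, h0S⟩
  have h1RU : (1:ℂ) ∈ RU U := Set.mem_iUnion.mpr ⟨0, h1S⟩
  have liRU : ∀ a ∈ U, ∀ b ∈ U, a ≠ b → a ≠ -b →
      ∀ x ∈ RU U, ∀ y ∈ RU U, lineInt a b x y ∈ RU U := by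
    intro a ha b hb h1 h2 x hx y hy
    obtain ⟨n, hxn⟩ := Set.mem_iUnion.mp hx
    obtain ⟨m, hym⟩ := Set.mem_iUnion.mp hy
    exact Set.mem_iUnion.mpr ⟨max n m + 1, a, ha, b, hb, h1, h2,
      x, monole n (max n m) (le_max_left n m) hxn,
      y, monole m (max n m) (le_max_right n m) hym, rfl⟩
  -- coordinates setup in basis (u, v), with γ = w
  have hg₁ : brkt v w / brkt v u ≠ 0 := div_ne_zero hbvw hbvu
  have hg₂ : brkt u w / brkt u v ≠ 0 := div_ne_zero hbuw hbuv
  have hγ : w = (brkt v w / brkt v u) * u + (brkt u w / brkt u v) * v := coords hbuv w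
  -- negation closure
  have negRU : ∀ x ∈ RU U, -x ∈ RU U := by
    intro x hx
    rw [← neg_identity hbuv hg₁ hg₂ (sc_ratio _ _ _ _) (sc_ratio _ _ _ _)
      (sc_ratio _ _ _ _) (sc_ratio _ _ _ _) hγ (coords hbuv x)]
    exact liRU u hu v hv huv huv' _
      (liRU v hv w hw hvw hvw' _ h0RU _
        (liRU u hu v hv huv huv' _ h0RU _
          (liRU u hu w hw huw huw' _ hx _ h0RU))) _
      (liRU u hu w hw huw huw' _ h0RU _
        (liRU u hu v hv huv huv' _
          (liRU v hv w hw hvw hvw' _ hx _ h0RU) _ h0RU))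
  -- addition closure
  have addRU : ∀ x ∈ RU U, ∀ y ∈ RU U, x + y ∈ RU U := by
    intro x hx y hy
    rw [← add_identity hbuv hg₁ hg₂ (sc_ratio _ _ _ _) (sc_ratio _ _ _ _)
      (sc_ratio _ _ _ _) (sc_ratio _ _ _ _) (sc_ratio _ _ _ _) (sc_ratio _ _ _ _)
      hγ (coords hbuv x) (coords hbuv y)]
    exact liRU u hu v hv huv huv' _
      (liRU v hv w hw hvw hvw' _
        (liRU u hu w hw huw huw' _ hx _
          (liRU u hu v hv huv huv' _ h0RU _ hx)) _
        (liRU u hu v hv huv huv' _ hy _ hx)) _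
      (liRU u hu w hw huw huw' _
        (liRU v hv w hw hvw hvw' _ hx _
          (liRU u hu v hv huv huv' _ hx _ h0RU)) _
        (liRU u hu v hv huv huv' _ hx _ hy))
  -- p ∈ P lies in RU
  have pRU : ∀ p ∈ projSet U, ((p:ℝ) : ℂ) ∈ RU U := by
    rintro p ⟨γ, hγU, δ, hδU, h1, h2, z, ⟨a, haU, b, hbU, g1, g2, rfl⟩, hpz⟩
    have hz1 : lineInt a b 0 1 ∈ stepSet U 1 :=
      ⟨a, haU, b, hbU, g1, g2, 0, h0S, 1, h1S, rfl⟩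
    have : ((p:ℝ) : ℂ) ∈ stepSet U 2 :=
      ⟨γ, hγU, δ, hδU, h1, h2, 0, mono 0 h0S, lineInt a b 0 1, hz1, hpz⟩
    exact Set.mem_iUnion.mpr ⟨2, this⟩
  -- part (1)
  have part1 : ∀ p ∈ projSet U, ∀ x ∈ RU U, ((p:ℝ) : ℂ) * x ∈ RU U := by
    intro p hp x hx
    obtain ⟨n, hxn⟩ := Set.mem_iUnion.mp hx
    clear hx
    induction n generalizing x with
    | zero =>
      rcases hxn with h | h
      · rw [h, mul_zero]; exact h0RU
      · rw [Set.mem_singleton_iff.mp h, mul_one]; exact pRU p hp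
    | succ n ih =>
      obtain ⟨a, ha, b, hb, h1, h2, p', hp', q', hq', rfl⟩ := hxn
      rw [← lineInt_smul]
      exact liRU a ha b hb h1 h2 _ (ih p' hp') _ (ih q' hq')
  refine ⟨part1, fun r hr => ?_⟩
  have H : ∀ x ∈ RU U, (r : ℂ) * x ∈ RU U := by
    induction hr using Subring.closure_induction with
    | mem s hs => exact part1 s hs
    | zero => intro x hx; rw [Complex.ofReal_zero, zero_mul]; exact h0RU
    | one => intro x hx; rw [Complex.ofReal_one, one_mul]; exact hx
    | add a b ha hb iha ihb =>
      intro x hx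
      rw [Complex.ofReal_add, add_mul]
      exact addRU _ (iha x hx) _ (ihb x hx)
    | neg a ha iha =>
      intro x hx
      rw [Complex.ofReal_neg, neg_mul]
      exact negRU _ (iha x hx)
    | mul a b ha hb iha ihb =>
      intro x hx
      rw [Complex.ofReal_mul, mul_assoc]
      exact iha _ (ihb x hx)
  simpa using H 1 h1RU
end

section
/- Suppose 1 ∈ U and U contains elements u, v, w such that 1, u, v, w are pairwise non-±-equal. Then every length-two monomial of U, i.e., every point of the form I_{γ,δ}(0, I_{α,β}(0,1)) with α, β, γ, δ ∈ U, α ≠ ±β, γ ≠ ±δ, is a ℤ[P]-linear combination of elementary monomials: it can be written as a finite sum Σᵢ cᵢ·zᵢ with each cᵢ ∈ ℤ[P] and each zᵢ an elementary monomial. -/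
open Complex

lemma brkt_antisymm (x y : ℂ) : brkt x y = - brkt y x := by
  simp only [brkt]; ring

lemma brkt_ne_zero_s11 {a b : ℂ} (ha : ‖a‖ = 1) (hb : ‖b‖ = 1)
    (h1 : a ≠ b) (h2 : a ≠ -b) : brkt a b ≠ 0 := by
  intro h
  have ha1 : a * (starRingEnd ℂ) a = 1 := by
    rw [Complex.mul_conj]; norm_cast; simp [Complex.normSq_eq_norm_sq, ha]
  have hb1 : b * (starRingEnd ℂ) b = 1 := by
    rw [Complex.mul_conj]; norm_cast; simp [Complex.normSq_eq_norm_sq, hb]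
  have h' : a * (starRingEnd ℂ) b - b * (starRingEnd ℂ) a = 0 := h
  have hsq : (a - b) * (a + b) = 0 := by
    linear_combination a * b * h' - a^2 * hb1 + b^2 * ha1
  rcases mul_eq_zero.mp hsq with h0 | h0
  · exact h1 (sub_eq_zero.mp h0)
  · exact h2 (eq_neg_of_add_eq_zero_left h0)

lemma ratio_real (x y z t : ℂ) :
    (starRingEnd ℂ) (brkt x y / brkt z t) = brkt x y / brkt z t := by
  rw [map_div₀, brkt_conj, brkt_conj, neg_div_neg_eq]

lemma brkt_real_smul (s d a : ℂ) (hs : (starRingEnd ℂ) s = s) :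
    brkt d (s * a) = s * brkt d a := by
  simp only [brkt, map_mul, hs]; ring

lemma brkt_neg_one (x : ℂ) : brkt (-1) x = - brkt 1 x := by
  simp only [brkt, map_one, map_neg]; ring

lemma brkt_neg_right (x y : ℂ) : brkt x (-y) = - brkt x y := by
  simp only [brkt, map_neg]; ring

lemma lineInt_zero (x y q : ℂ) : lineInt x y 0 q = brkt y q / brkt y x * x := by
  simp [lineInt, brkt]

lemma ne_neg_symm {a b : ℂ} (h : a ≠ -b) : b ≠ -a := fun h' => h (by rw [h', neg_neg])

lemma mem_projSet_aux {U : Set ℂ} (h1U : (1 : ℂ) ∈ U)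
    {a b d : ℂ} (ha : a ∈ U) (hb : b ∈ U) (hd : d ∈ U)
    (hab : a ≠ b) (hab' : a ≠ -b) (hd1 : d ≠ 1) (hd1' : d ≠ -1) :
    ∃ ρ : ℝ, ρ ∈ projSet U ∧
      (ρ : ℂ) = brkt b 1 / brkt b a * (brkt d a / brkt d 1) := by
  set V : ℂ := brkt b 1 / brkt b a * (brkt d a / brkt d 1) with hV
  have hconj : (starRingEnd ℂ) V = V := by
    rw [hV, map_mul, ratio_real, ratio_real]
  have hre : ((V.re : ℝ) : ℂ) = V := Complex.conj_eq_iff_re.mp hconj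
  refine ⟨V.re, ⟨1, h1U, d, hd, Ne.symm hd1, fun h => hd1' (by linear_combination h),
    lineInt a b 0 1, ⟨a, ha, b, hb, hab, hab', rfl⟩, ?_⟩, hre⟩
  rw [hre, lineInt_zero, lineInt_zero, brkt_real_smul _ _ _ (ratio_real _ _ _ _)]
  rw [hV]; ring

/-- if `1 ∈ U` and `U` contains `u, v, w` with `1, u, v, w` pairwise
non-±-equal, then every length-two monomial `I_{γ,δ}(0, I_{α,β}(0,1))` is a
`ℤ[P]`-linear combination of elementary monomials. -/
theorem stmt11 (U : Set ℂ) (hU : ∀ z ∈ U, ‖z‖ = 1) (h1U : (1 : ℂ) ∈ U)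
    (u v w : ℂ) (hu : u ∈ U) (hv : v ∈ U) (hw : w ∈ U)
    (hu1 : u ≠ 1) (hu1' : u ≠ -1) (hv1 : v ≠ 1) (hv1' : v ≠ -1)
    (hw1 : w ≠ 1) (hw1' : w ≠ -1)
    (huv : u ≠ v) (huv' : u ≠ -v) (huw : u ≠ w) (huw' : u ≠ -w)
    (hvw : v ≠ w) (hvw' : v ≠ -w)
    (α β γ δ : ℂ) (hα : α ∈ U) (hβ : β ∈ U) (hγ : γ ∈ U) (hδ : δ ∈ U)
    (hαβ : α ≠ β) (hαβ' : α ≠ -β) (hγδ : γ ≠ δ) (hγδ' : γ ≠ -δ) :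
    IsZPComb U (lineInt γ δ 0 (lineInt α β 0 1)) := by
  have habsα := hU α hα
  have habsβ := hU β hβ
  have habsγ := hU γ hγ
  have habsδ := hU δ hδ
  have habs1 : ‖(1 : ℂ)‖ = 1 := norm_one
  have hβα : brkt β α ≠ 0 := brkt_ne_zero_s11 habsβ habsα (Ne.symm hαβ) (ne_neg_symm hαβ')
  have hδγ : brkt δ γ ≠ 0 := brkt_ne_zero_s11 habsδ habsγ (Ne.symm hγδ) (ne_neg_symm hγδ')
  have hT : lineInt γ δ 0 (lineInt α β 0 1)
      = brkt β 1 / brkt β α * brkt δ α / brkt δ γ * γ := by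
    rw [lineInt_zero, lineInt_zero, brkt_real_smul _ _ _ (ratio_real _ _ _ _)]
  by_cases hδpm : δ = 1 ∨ δ = -1
  · -- δ = ±1
    by_cases hαpm : α = 1 ∨ α = -1
    · -- case 2: result is 0
      have hδα0 : brkt δ α = 0 := by
        rcases hδpm with h | h <;> rcases hαpm with h' | h' <;> subst h <;> subst h' <;>
          simp [brkt]
      refine ⟨0, Fin.elim0, Fin.elim0, fun i => i.elim0, fun i => i.elim0, ?_⟩
      simp [hT, hδα0]
    · push_neg at hαpm
      obtain ⟨hα1, hα1'⟩ := hαpm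
      have hγ1 : γ ≠ 1 := by
        rcases hδpm with h | h
        · rw [h] at hγδ; exact hγδ
        · rw [h, neg_neg] at hγδ'; exact hγδ'
      have hγ1' : γ ≠ -1 := by
        rcases hδpm with h | h
        · rw [h] at hγδ'; exact hγδ'
        · rw [h] at hγδ; exact hγδ
      by_cases hαγpm : α = γ ∨ α = -γ
      · -- case 4: result is the elementary monomial lineInt α β 0 1 itself
        refine ⟨1, fun _ => 1, fun _ => lineInt α β 0 1,
          fun _ => one_mem _, fun _ => ⟨α, hα, β, hβ, hαβ, hαβ', rfl⟩, ?_⟩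
        rw [Fin.sum_univ_one, hT, lineInt_zero]
        push_cast
        rcases hαγpm with h | h <;> subst h
        · field_simp
        · rw [brkt_neg_right β γ] at hβα
          have hβγ : brkt β γ ≠ 0 := fun h0 => hβα (by rw [h0, neg_zero])
          rw [brkt_neg_right β γ, brkt_neg_right δ γ]
          field_simp [hβγ]
      · push_neg at hαγpm
        obtain ⟨hαγ, hαγ'⟩ := hαγpm
        -- case 3
        obtain ⟨ρ, hρP, hρ⟩ := mem_projSet_aux h1U hα hβ hγ hαβ hαβ' hγ1 hγ1'
        have h1γ : brkt 1 γ ≠ 0 :=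
          brkt_ne_zero_s11 habs1 habsγ (Ne.symm hγ1) (ne_neg_symm hγ1')
        have hαγ0 : brkt α γ ≠ 0 := brkt_ne_zero_s11 habsα habsγ hαγ hαγ'
        refine ⟨1, fun _ => -ρ, fun _ => lineInt γ α 0 1,
          fun _ => neg_mem (Subring.subset_closure hρP),
          fun _ => ⟨γ, hγ, α, hα, Ne.symm hαγ, ne_neg_symm hαγ', rfl⟩, ?_⟩
        rw [Fin.sum_univ_one, hT, lineInt_zero]
        push_cast
        rw [hρ]
        rw [brkt_antisymm γ α, brkt_antisymm γ 1, brkt_antisymm α 1]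
        rcases hδpm with h | h <;> subst h
        · field_simp
        · rw [brkt_neg_one α, brkt_neg_one γ]
          field_simp
  · -- case 1: δ ≠ ±1
    push_neg at hδpm
    obtain ⟨hδ1, hδ1'⟩ := hδpm
    obtain ⟨ε, hεU, hε1, hε1', hεγ, hεγ'⟩ :
        ∃ ε, ε ∈ U ∧ ε ≠ 1 ∧ ε ≠ -1 ∧ ε ≠ γ ∧ ε ≠ -γ := by
      by_cases h : u = γ ∨ u = -γ
      · refine ⟨v, hv, hv1, hv1', fun hh => ?_, fun hh => ?_⟩
        · rcases h with h | h
          · exact huv (h.trans hh.symm)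
          · exact huv' (h.trans (by rw [hh]))
        · rcases h with h | h
          · exact huv' (by rw [hh, neg_neg, h])
          · exact huv (h.trans hh.symm)
      · push_neg at h
        exact ⟨u, hu, hu1, hu1', h.1, h.2⟩
    obtain ⟨ρ1, hρ1P, hρ1⟩ := mem_projSet_aux h1U hα hβ hδ hαβ hαβ' hδ1 hδ1'
    obtain ⟨ρ2, hρ2P, hρ2⟩ := mem_projSet_aux h1U hγ hδ hεU hγδ hγδ' hε1 hε1'
    have hδ1ne : brkt δ 1 ≠ 0 := brkt_ne_zero_s11 habsδ habs1 hδ1 hδ1'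
    have hε1ne : brkt ε 1 ≠ 0 := brkt_ne_zero_s11 (hU ε hεU) habs1 hε1 hε1'
    have hεγne : brkt ε γ ≠ 0 := brkt_ne_zero_s11 (hU ε hεU) habsγ hεγ hεγ'
    refine ⟨1, fun _ => ρ1 * ρ2, fun _ => lineInt γ ε 0 1,
      fun _ => mul_mem (Subring.subset_closure hρ1P) (Subring.subset_closure hρ2P),
      fun _ => ⟨γ, hγ, ε, hεU, Ne.symm hεγ, ne_neg_symm hεγ', rfl⟩, ?_⟩
    rw [Fin.sum_univ_one, hT, lineInt_zero]
    push_cast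
    rw [hρ1, hρ2]
    field_simp
end

section
/- For U = {1, e^{iπ/6}, e^{iπ/3}, e^{iπ/2}}, the set R(U) is a subring of ℂ (it contains 0 and 1 and is closed under addition, negation, and multiplication). -/
open Complex

/-! ### Auxiliary development -/

noncomputable def sC : ℂ := (Real.sqrt 3 : ℝ)
noncomputable def zC : ℂ := (sC + I)/2
noncomputable def wC : ℂ := (1 + sC*I)/2

lemma conj_sC : (starRingEnd ℂ) sC = sC := Complex.conj_ofReal _
lemma hs2 : sC^2 = 3 := by
  rw [sC, ← Complex.ofReal_pow, Real.sq_sqrt (by norm_num)]; norm_num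
lemma hsR2 : Real.sqrt 3 ^ 2 = 3 := Real.sq_sqrt (by norm_num)
lemma hsRpos : 0 < Real.sqrt 3 := Real.sqrt_pos.mpr (by norm_num)
lemma sC_ne : sC ≠ 0 := by
  intro h; have := hs2; rw [h] at this; norm_num at this
lemma h6ne : (6:ℂ) ≠ 0 := by norm_num
lemma hkne (k : ℕ) : (6:ℂ)^k ≠ 0 := pow_ne_zero _ h6ne

lemma brkt_comm (a b : ℂ) : brkt b a = - brkt a b := by unfold brkt; ring
lemma brkt_pull (a w : ℂ) (t : ℕ) : brkt a ((6:ℂ)^t * w) = 6^t * brkt a w := by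
  simp only [brkt, map_mul, map_pow, map_ofNat]; ring
lemma lineInt_comm (α β p q : ℂ) : lineInt α β p q = lineInt β α q p := by
  rw [lineInt, lineInt]; ring

lemma lineInt_eq {α β : ℂ} (p q : ℂ) {d : ℂ} (hd : d ≠ 0) (h : brkt α β = d) :
    lineInt α β p q = (brkt α p * β - brkt β q * α) / d := by
  rw [lineInt, h, brkt_comm α β, h]
  simp only [div_neg, neg_mul, div_mul_eq_mul_div, ← sub_eq_add_neg, div_sub_div_same]

lemma b_1z : brkt 1 zC = -I := by
  simp only [brkt, zC, map_div₀, map_add, map_one, map_ofNat, Complex.conj_I, conj_sC]; ring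
lemma b_1w : brkt 1 wC = -sC*I := by
  simp only [brkt, wC, map_div₀, map_add, map_mul, map_one, map_ofNat, Complex.conj_I, conj_sC]; ring
lemma b_1i : brkt 1 I = -2*I := by
  simp only [brkt, map_one, Complex.conj_I]; ring
lemma b_zw : brkt zC wC = -I := by
  simp only [brkt, zC, wC, map_div₀, map_add, map_mul, map_one, map_ofNat, Complex.conj_I, conj_sC]
  field_simp
  linear_combination (-2*I) * hs2
lemma b_zi : brkt zC I = -sC*I := by
  simp only [brkt, zC, map_div₀, map_add, map_one, map_ofNat, Complex.conj_I, conj_sC]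
  field_simp; ring
lemma b_wi : brkt wC I = -I := by
  simp only [brkt, wC, map_div₀, map_add, map_mul, map_one, map_ofNat, Complex.conj_I, conj_sC]
  field_simp
  ring_nf

lemma ne_nI : (-I : ℂ) ≠ 0 := by simp [Complex.I_ne_zero]
lemma ne_nsI : (-sC*I : ℂ) ≠ 0 := by
  simp only [neg_mul, neg_ne_zero]; exact mul_ne_zero sC_ne Complex.I_ne_zero
lemma ne_n2I : (-2*I : ℂ) ≠ 0 := by
  simp only [neg_mul, neg_ne_zero]; exact mul_ne_zero two_ne_zero Complex.I_ne_zero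

/-! Bracket values against points of the candidate ring. -/

lemma fb1 (m n : ℤ) (k : ℕ) (p : ℂ) (hp : 6^k * p = m + n*sC*I) :
    brkt 1 p = (-2*n*sC*I)/6^k := by
  rw [eq_div_iff (hkne k), mul_comm, ← brkt_pull, hp]
  simp only [brkt, map_add, map_mul, map_one, map_intCast, conj_sC, Complex.conj_I]
  ring
lemma fbz (m n : ℤ) (k : ℕ) (p : ℂ) (hp : 6^k * p = m + n*sC*I) :
    brkt zC p = (((m:ℂ)-3*n)*I)/6^k := by
  rw [eq_div_iff (hkne k), mul_comm, ← brkt_pull, hp]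
  simp only [brkt, zC, map_add, map_mul, map_div₀, map_one, map_ofNat,
    map_intCast, conj_sC, Complex.conj_I]
  field_simp
  ring_nf
  all_goals simp [Complex.I_sq, hs2]
  all_goals ring_nf
lemma fbw (m n : ℤ) (k : ℕ) (p : ℂ) (hp : 6^k * p = m + n*sC*I) :
    brkt wC p = (((m:ℂ)-n)*sC*I)/6^k := by
  rw [eq_div_iff (hkne k), mul_comm, ← brkt_pull, hp]
  simp only [brkt, wC, map_add, map_mul, map_div₀, map_one, map_ofNat,
    map_intCast, conj_sC, Complex.conj_I]
  field_simp
  ring_nf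
  all_goals simp [Complex.I_sq, hs2]
  all_goals ring_nf
lemma fbi (m n : ℤ) (k : ℕ) (p : ℂ) (hp : 6^k * p = m + n*sC*I) :
    brkt I p = (2*m*I)/6^k := by
  rw [eq_div_iff (hkne k), mul_comm, ← brkt_pull, hp]
  simp only [brkt, map_add, map_mul, map_one, map_intCast, conj_sC, Complex.conj_I]
  ring_nf
  all_goals simp [Complex.I_sq, hs2]
  all_goals ring_nf

/-! The six upper-bound case identities. -/

lemma case_1z (m n m' n' : ℤ) (k j : ℕ) (p q : ℂ)
    (hp : 6^k * p = m + n*sC*I) (hq : 6^j * q = m' + n'*sC*I) :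
    6^(k+j) * lineInt 1 zC p q
      = ((3*n*6^j + (m'-3*n')*6^k : ℤ)) + ((n*6^j : ℤ))*sC*I := by
  rw [lineInt_eq p q ne_nI b_1z, fb1 m n k p hp, fbz m' n' j q hq, zC]
  rw [← mul_div_assoc, div_eq_iff ne_nI]
  field_simp
  ring_nf
  all_goals simp [Complex.I_sq, hs2, pow_succ, pow_add]
  all_goals ring_nf

lemma case_1w (m n m' n' : ℤ) (k j : ℕ) (p q : ℂ)
    (hp : 6^k * p = m + n*sC*I) (hq : 6^j * q = m' + n'*sC*I) :
    6^(k+j) * lineInt 1 wC p q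
      = ((n*6^j + (m'-n')*6^k : ℤ)) + ((n*6^j : ℤ))*sC*I := by
  rw [lineInt_eq p q ne_nsI b_1w, fb1 m n k p hp, fbw m' n' j q hq, wC]
  rw [← mul_div_assoc, div_eq_iff ne_nsI]
  field_simp
  ring_nf
  all_goals simp [Complex.I_sq, hs2, pow_succ, pow_add]
  all_goals ring_nf

lemma case_1i (m n m' n' : ℤ) (k j : ℕ) (p q : ℂ)
    (hp : 6^k * p = m + n*sC*I) (hq : 6^j * q = m' + n'*sC*I) :
    6^(k+j) * lineInt 1 I p q
      = ((m'*6^k : ℤ)) + ((n*6^j : ℤ))*sC*I := by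
  rw [lineInt_eq p q ne_n2I b_1i, fb1 m n k p hp, fbi m' n' j q hq]
  rw [← mul_div_assoc, div_eq_iff ne_n2I]
  field_simp
  ring_nf
  all_goals simp [Complex.I_sq, hs2, pow_succ, pow_add]
  all_goals ring_nf

lemma case_zw (m n m' n' : ℤ) (k j : ℕ) (p q : ℂ)
    (hp : 6^k * p = m + n*sC*I) (hq : 6^j * q = m' + n'*sC*I) :
    6^(k+j+1) * lineInt zC wC p q
      = ((9*(m'-n')*6^k - 3*(m-3*n)*6^j : ℤ)) + ((3*(m'-n')*6^k - 3*(m-3*n)*6^j : ℤ))*sC*I := by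
  rw [lineInt_eq p q ne_nI b_zw, fbz m n k p hp, fbw m' n' j q hq, zC, wC]
  rw [← mul_div_assoc, div_eq_iff ne_nI]
  field_simp
  ring_nf
  all_goals simp [Complex.I_sq, hs2, pow_succ, pow_add]
  all_goals ring_nf

lemma case_zi (m n m' n' : ℤ) (k j : ℕ) (p q : ℂ)
    (hp : 6^k * p = m + n*sC*I) (hq : 6^j * q = m' + n'*sC*I) :
    6^(k+j+1) * lineInt zC I p q
      = ((6*m'*6^k : ℤ)) + ((2*m'*6^k - 2*(m-3*n)*6^j : ℤ))*sC*I := by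
  rw [lineInt_eq p q ne_nsI b_zi, fbz m n k p hp, fbi m' n' j q hq, zC]
  rw [← mul_div_assoc, div_eq_iff ne_nsI]
  field_simp
  ring_nf
  all_goals simp [Complex.I_sq, hs2, pow_succ, pow_add]
  all_goals ring_nf

lemma case_wi (m n m' n' : ℤ) (k j : ℕ) (p q : ℂ)
    (hp : 6^k * p = m + n*sC*I) (hq : 6^j * q = m' + n'*sC*I) :
    6^(k+j) * lineInt wC I p q
      = ((m'*6^k : ℤ)) + ((m'*6^k - (m-n)*6^j : ℤ))*sC*I := by
  rw [lineInt_eq p q ne_nI b_wi, fbw m n k p hp, fbi m' n' j q hq, wC]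
  rw [← mul_div_assoc, div_eq_iff ne_nI]
  field_simp
  ring_nf
  all_goals simp [Complex.I_sq, hs2, pow_succ, pow_add]
  all_goals ring_nf

/-! Lower-bound value lemmas. -/

lemma c1 (p q : ℂ) : lineInt 1 I p q = (p - (starRingEnd ℂ) p)/2 + (q + (starRingEnd ℂ) q)/2 := by
  rw [lineInt_eq p q ne_n2I b_1i]
  rw [div_eq_iff ne_n2I]
  simp only [brkt, map_one, Complex.conj_I]
  ring_nf
  all_goals simp [Complex.I_sq]
  all_goals ring_nf

lemma c2 (x u : ℝ) : lineInt zC wC (x:ℂ) (u:ℂ)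
    = (((3*u-x)/2 : ℝ) : ℂ) + ((Real.sqrt 3*(u-x)/2 : ℝ) : ℂ)*I := by
  rw [lineInt_eq _ _ ne_nI b_zw, div_eq_iff ne_nI]
  simp only [brkt, zC, wC, map_div₀, map_add, map_mul, map_one, map_ofNat,
    Complex.conj_I, conj_sC, Complex.conj_ofReal]
  push_cast
  rw [show ((Real.sqrt 3 : ℝ):ℂ) = sC from rfl]
  field_simp
  ring_nf
  all_goals simp [Complex.I_sq, hs2]
  all_goals ring_nf

lemma c3 (y u : ℝ) : lineInt 1 zC ((y:ℂ)*I) (u:ℂ)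
    = ((u + Real.sqrt 3*y : ℝ) : ℂ) + (y:ℂ)*I := by
  rw [lineInt_eq _ _ ne_nI b_1z, div_eq_iff ne_nI]
  simp only [brkt, zC, map_div₀, map_add, map_mul, map_one, map_ofNat,
    Complex.conj_I, conj_sC, Complex.conj_ofReal]
  push_cast
  rw [show ((Real.sqrt 3 : ℝ):ℂ) = sC from rfl]
  field_simp
  ring_nf
  all_goals simp [Complex.I_sq, hs2]
  all_goals ring_nf

lemma c4 (x u : ℝ) : lineInt zC I (x:ℂ) (u:ℂ)
    = (u:ℂ) + ((Real.sqrt 3*(u-x)/3 : ℝ) : ℂ)*I := by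
  rw [lineInt_eq _ _ ne_nsI b_zi, div_eq_iff ne_nsI]
  simp only [brkt, zC, map_div₀, map_add, map_mul, map_one, map_ofNat,
    Complex.conj_I, conj_sC, Complex.conj_ofReal]
  push_cast
  rw [show ((Real.sqrt 3 : ℝ):ℂ) = sC from rfl]
  field_simp
  ring_nf
  all_goals simp [Complex.I_sq, hs2]
  all_goals ring_nf

lemma c5 (y u : ℝ) : lineInt 1 wC ((y:ℂ)*I) (u:ℂ)
    = ((u + Real.sqrt 3*y/3 : ℝ) : ℂ) + (y:ℂ)*I := by
  rw [lineInt_eq _ _ ne_nsI b_1w, div_eq_iff ne_nsI]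
  simp only [brkt, wC, map_div₀, map_add, map_mul, map_one, map_ofNat,
    Complex.conj_I, conj_sC, Complex.conj_ofReal]
  push_cast
  rw [show ((Real.sqrt 3 : ℝ):ℂ) = sC from rfl]
  field_simp
  ring_nf
  all_goals simp [Complex.I_sq, hs2]
  all_goals ring_nf

/-! Distinctness of directions. -/

lemma sim : sC.im = 0 := Complex.ofReal_im _
lemma sre : sC.re = Real.sqrt 3 := Complex.ofReal_re _

lemma d_1z : (1:ℂ) ≠ zC ∧ (1:ℂ) ≠ -zC := by
  constructor <;> intro h <;>
  · have := congrArg Complex.im h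
    simp [zC, Complex.div_im, sim] at this
lemma d_1w : (1:ℂ) ≠ wC ∧ (1:ℂ) ≠ -wC := by
  constructor <;> intro h <;>
  · have := congrArg Complex.im h
    simp [wC, Complex.div_im, sim, sre] at this
    all_goals nlinarith [hsR2, hsRpos]
lemma d_1i : (1:ℂ) ≠ I ∧ (1:ℂ) ≠ -I := by
  constructor <;> intro h <;>
  · have := congrArg Complex.im h
    simp at this
lemma d_zw : zC ≠ wC ∧ zC ≠ -wC := by
  constructor <;> intro h <;>
  · have := congrArg Complex.re h
    simp [zC, wC, Complex.div_re, sim, sre] at this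
    all_goals nlinarith [hsR2, hsRpos]
lemma d_zi : zC ≠ I ∧ zC ≠ -I := by
  constructor <;> intro h <;>
  · have := congrArg Complex.re h
    simp [zC, Complex.div_re, sim, sre] at this
lemma d_wi : wC ≠ I ∧ wC ≠ -I := by
  constructor <;> intro h <;>
  · have := congrArg Complex.re h
    simp [wC, Complex.div_re, sim, sre] at this

/-! The four directions and the candidate ring carrier. -/

noncomputable def U4 : Set ℂ := {1, zC, wC, I}

lemma mem1 : (1:ℂ) ∈ U4 := Or.inl rfl
lemma memz : zC ∈ U4 := Or.inr (Or.inl rfl)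
lemma memw : wC ∈ U4 := Or.inr (Or.inr (Or.inl rfl))
lemma memi : I ∈ U4 := Or.inr (Or.inr (Or.inr rfl))

def Aset : Set ℂ := {z | ∃ m n : ℤ, ∃ k : ℕ, (6:ℂ)^k * z = m + n*sC*I}

lemma upper : ∀ N, stepSet U4 N ⊆ Aset := by
  intro N
  induction N with
  | zero =>
    rintro z (rfl | rfl)
    · exact ⟨0, 0, 0, by norm_num⟩
    · exact ⟨1, 0, 0, by norm_num⟩
  | succ N ih =>
    rintro z ⟨α, hα, β, hβ, hne, hne', p, hp, q, hq, rfl⟩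
    obtain ⟨a, b, k, hpr⟩ := ih hp
    obtain ⟨c, d, j, hqr⟩ := ih hq
    simp only [U4, Set.mem_insert_iff, Set.mem_singleton_iff] at hα hβ
    rcases hα with rfl | rfl | rfl | rfl <;> rcases hβ with rfl | rfl | rfl | rfl
    · exact absurd rfl hne
    · exact ⟨_, _, _, case_1z a b c d k j p q hpr hqr⟩
    · exact ⟨_, _, _, case_1w a b c d k j p q hpr hqr⟩
    · exact ⟨_, _, _, case_1i a b c d k j p q hpr hqr⟩
    · exact ⟨_, _, _, by rw [lineInt_comm]; exact case_1z c d a b j k q p hqr hpr⟩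
    · exact absurd rfl hne
    · exact ⟨_, _, _, case_zw a b c d k j p q hpr hqr⟩
    · exact ⟨_, _, _, case_zi a b c d k j p q hpr hqr⟩
    · exact ⟨_, _, _, by rw [lineInt_comm]; exact case_1w c d a b j k q p hqr hpr⟩
    · exact ⟨_, _, _, by rw [lineInt_comm]; exact case_zw c d a b j k q p hqr hpr⟩
    · exact absurd rfl hne
    · exact ⟨_, _, _, case_wi a b c d k j p q hpr hqr⟩
    · exact ⟨_, _, _, by rw [lineInt_comm]; exact case_1i c d a b j k q p hqr hpr⟩
    · exact ⟨_, _, _, by rw [lineInt_comm]; exact case_zi c d a b j k q p hqr hpr⟩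
    · exact ⟨_, _, _, by rw [lineInt_comm]; exact case_wi c d a b j k q p hqr hpr⟩
    · exact absurd rfl hne

/-! Lower bound machinery. -/

lemma lineInt_self_s15 (p : ℂ) : lineInt 1 I p p = p := by rw [c1]; ring

lemma mono : ∀ N, stepSet U4 N ⊆ stepSet U4 (N+1) := by
  intro N p hp
  exact ⟨1, mem1, I, memi, d_1i.1, d_1i.2, p, hp, p, hp, (lineInt_self_s15 p).symm⟩

lemma mono' : ∀ {M N : ℕ}, M ≤ N → stepSet U4 M ⊆ stepSet U4 N := by
  intro M N h
  induction h with
  | refl => exact fun _ h => h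
  | step _ ih => exact fun z hz => mono _ (ih hz)

lemma hR0 : (0:ℂ) ∈ RU U4 := Set.mem_iUnion.mpr ⟨0, Or.inl rfl⟩
lemma hR1 : (1:ℂ) ∈ RU U4 := Set.mem_iUnion.mpr ⟨0, Or.inr rfl⟩

lemma hcl {α β p q : ℂ} (hα : α ∈ U4) (hβ : β ∈ U4) (h1 : α ≠ β) (h2 : α ≠ -β)
    (hp : p ∈ RU U4) (hq : q ∈ RU U4) : lineInt α β p q ∈ RU U4 := by
  obtain ⟨N1, hp⟩ := Set.mem_iUnion.mp hp
  obtain ⟨N2, hq⟩ := Set.mem_iUnion.mp hq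
  exact Set.mem_iUnion.mpr ⟨max N1 N2 + 1,
    ⟨α, hα, β, hβ, h1, h2, p, mono' (le_max_left _ _) hp,
      q, mono' (le_max_right _ _) hq, rfl⟩⟩

lemma opComb {x y : ℝ} (hx : ((x:ℝ):ℂ) ∈ RU U4) (hy : ((y:ℝ):ℂ)*I ∈ RU U4) :
    ((x:ℂ) + (y:ℂ)*I) ∈ RU U4 := by
  have h := hcl mem1 memi d_1i.1 d_1i.2 hy hx
  rwa [show lineInt 1 I ((y:ℂ)*I) (x:ℂ) = (x:ℂ) + (y:ℂ)*I from by
    rw [c1]; simp [Complex.conj_ofReal]; all_goals ring] at h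

lemma opRe {a b : ℝ} (h : ((a:ℂ) + (b:ℂ)*I) ∈ RU U4) : ((a:ℝ):ℂ) ∈ RU U4 := by
  have h2 := hcl mem1 memi d_1i.1 d_1i.2 hR0 h
  rwa [show lineInt 1 I 0 ((a:ℂ) + (b:ℂ)*I) = (a:ℂ) from by
    rw [c1]; simp [Complex.conj_ofReal]; all_goals ring] at h2

lemma opIm {a b : ℝ} (h : ((a:ℂ) + (b:ℂ)*I) ∈ RU U4) : ((b:ℝ):ℂ)*I ∈ RU U4 := by
  have h2 := hcl mem1 memi d_1i.1 d_1i.2 h hR0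
  rwa [show lineInt 1 I ((a:ℂ) + (b:ℂ)*I) 0 = (b:ℂ)*I from by
    rw [c1]; simp [Complex.conj_ofReal]; all_goals ring] at h2

def XR : Set ℝ := {x | ((x:ℝ):ℂ) ∈ RU U4}

lemma opE {x u : ℝ} (hx : x ∈ XR) (hu : u ∈ XR) : (3*u-x)/2 ∈ XR := by
  have h := hcl memz memw d_zw.1 d_zw.2 hx hu
  rw [c2] at h
  exact opRe h

lemma opA {u y : ℝ} (hu : u ∈ XR) (hy : ((y:ℝ):ℂ)*I ∈ RU U4) :
    u + Real.sqrt 3 * y ∈ XR := by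
  have h := hcl mem1 memz d_1z.1 d_1z.2 hy hu
  rw [c3] at h
  exact opRe h

lemma opI4 {x u : ℝ} (hx : x ∈ XR) (hu : u ∈ XR) :
    ((Real.sqrt 3*(u-x)/3 : ℝ):ℂ)*I ∈ RU U4 := by
  have h := hcl memz memi d_zi.1 d_zi.2 hx hu
  rw [c4] at h
  exact opIm h

lemma opC {y u : ℝ} (hu : u ∈ XR) (hy : ((y:ℝ):ℂ)*I ∈ RU U4) :
    u + Real.sqrt 3 * y / 3 ∈ XR := by
  have h := hcl mem1 memw d_1w.1 d_1w.2 hy hu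
  rw [c5] at h
  exact opRe h

lemma hX0 : (0:ℝ) ∈ XR := by
  have := hR0; unfold XR; simpa using this
lemma hX1 : (1:ℝ) ∈ XR := by
  have := hR1; unfold XR; simpa using this

lemma Xadd {x u : ℝ} (hx : x ∈ XR) (hu : u ∈ XR) : x + u ∈ XR := by
  have h1 := opI4 hX0 hu
  have h2 := opA hx h1
  rwa [show x + Real.sqrt 3 * (Real.sqrt 3*(u-0)/3) = x + u from by
    linear_combination (u/3) * hsR2] at h2

lemma Xneg {x : ℝ} (hx : x ∈ XR) : -x ∈ XR := by
  have h1 := opI4 hx hX0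
  have h2 := opA hX0 h1
  rwa [show (0:ℝ) + Real.sqrt 3 * (Real.sqrt 3*(0-x)/3) = -x from by
    linear_combination (-x/3) * hsR2] at h2

lemma Xhalf {x : ℝ} (hx : x ∈ XR) : x/2 ∈ XR := by
  have h := opE (Xneg hx) hX0
  rwa [show (3*0 - -x)/2 = x/2 from by ring] at h

lemma Xthird {x : ℝ} (hx : x ∈ XR) : x/3 ∈ XR := by
  have h1 := opI4 hX0 hx
  have h2 := opC hX0 h1
  rwa [show (0:ℝ) + Real.sqrt 3 * (Real.sqrt 3*(x-0)/3) / 3 = x/3 from by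
    linear_combination (x/9) * hsR2] at h2

lemma Ysqrt {x : ℝ} (hx : x ∈ XR) : ((Real.sqrt 3 * x : ℝ):ℂ)*I ∈ RU U4 := by
  have h3 : (3:ℝ)*x ∈ XR := by
    have := Xadd hx (Xadd hx hx)
    rwa [show x + (x + x) = 3*x from by ring] at this
  have h := opI4 hX0 h3
  rwa [show (Real.sqrt 3*(3*x-0)/3 : ℝ) = Real.sqrt 3 * x from by ring] at h

lemma XInt : ∀ m : ℤ, (m:ℝ) ∈ XR := by
  intro m
  induction m using Int.induction_on with
  | zero => simpa using hX0
  | succ i ih =>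
    have h2 := Xadd ih hX1
    rwa [show (((i:ℤ):ℝ) + 1) = (((i:ℤ)+1 : ℤ) : ℝ) from by push_cast; ring] at h2
  | pred i ih =>
    have h2 := Xadd ih (Xneg hX1)
    rwa [show (((-i:ℤ):ℝ) + -1) = ((-(i:ℤ)-1 : ℤ) : ℝ) from by push_cast; ring] at h2

lemma X6pow : ∀ (m : ℤ) (k : ℕ), ((m:ℝ)/6^k) ∈ XR := by
  intro m k
  induction k with
  | zero => simpa using XInt m
  | succ k ih =>
    have h := Xthird (Xhalf ih)
    rwa [show ((m:ℝ)/6^k)/2/3 = (m:ℝ)/6^(k+1) from by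
      rw [pow_succ]; ring] at h

lemma lower : Aset ⊆ RU U4 := by
  rintro z ⟨m, n, k, hz⟩
  have hz' : z = (((m:ℝ)/6^k : ℝ):ℂ) + (((Real.sqrt 3 * ((n:ℝ)/6^k)) : ℝ):ℂ)*I := by
    have hzz : z = ((m:ℂ) + (n:ℂ)*sC*I)/6^k := by
      rw [eq_div_iff (hkne k)]
      linear_combination hz
    rw [hzz, sC]
    push_cast
    ring
  rw [hz']
  exact opComb (X6pow m k) (Ysqrt (X6pow n k))

lemma RU_eq : RU U4 = Aset := by
  apply Set.Subset.antisymm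
  · exact Set.iUnion_subset upper
  · exact lower

/-! Values of the exponentials. -/

lemma hE1 : Complex.exp ((Real.pi / 6 : ℂ) * Complex.I) = zC := by
  have h : ((Real.pi / 6 : ℂ)) = ((Real.pi/6 : ℝ) : ℂ) := by push_cast; ring
  rw [h, Complex.exp_mul_I, ← Complex.ofReal_cos, ← Complex.ofReal_sin,
    Real.cos_pi_div_six, Real.sin_pi_div_six]
  rw [zC, sC]
  push_cast
  ring

lemma hE2 : Complex.exp ((Real.pi / 3 : ℂ) * Complex.I) = wC := by
  have h : ((Real.pi / 3 : ℂ)) = ((Real.pi/3 : ℝ) : ℂ) := by push_cast; ring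
  rw [h, Complex.exp_mul_I, ← Complex.ofReal_cos, ← Complex.ofReal_sin,
    Real.cos_pi_div_three, Real.sin_pi_div_three]
  rw [wC, sC]
  push_cast
  ring

lemma hE3 : Complex.exp ((Real.pi / 2 : ℂ) * Complex.I) = I := by
  have h : ((Real.pi / 2 : ℂ)) = ((Real.pi/2 : ℝ) : ℂ) := by push_cast; ring
  rw [h, Complex.exp_mul_I, ← Complex.ofReal_cos, ← Complex.ofReal_sin,
    Real.cos_pi_div_two, Real.sin_pi_div_two]
  push_cast
  ring

lemma Uorig_eq : ({1, Complex.exp ((Real.pi / 6 : ℂ) * Complex.I),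
    Complex.exp ((Real.pi / 3 : ℂ) * Complex.I),
    Complex.exp ((Real.pi / 2 : ℂ) * Complex.I)} : Set ℂ) = U4 := by
  rw [hE1, hE2, hE3]; rfl

lemma RUorig_eq : RU {1, Complex.exp ((Real.pi / 6 : ℂ) * Complex.I),
    Complex.exp ((Real.pi / 3 : ℂ) * Complex.I),
    Complex.exp ((Real.pi / 2 : ℂ) * Complex.I)} = Aset := by
  rw [Uorig_eq, RU_eq]

/-! Ring operations on `Aset`. -/

lemma Aset_zero : (0:ℂ) ∈ Aset := ⟨0, 0, 0, by norm_num⟩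
lemma Aset_one : (1:ℂ) ∈ Aset := ⟨1, 0, 0, by norm_num⟩

lemma Aset_add {z w : ℂ} (hz : z ∈ Aset) (hw : w ∈ Aset) : z + w ∈ Aset := by
  obtain ⟨m, n, k, hz⟩ := hz
  obtain ⟨m', n', j, hw⟩ := hw
  refine ⟨m*6^j + m'*6^k, n*6^j + n'*6^k, k+j, ?_⟩
  rw [pow_add]
  push_cast
  calc (6:ℂ)^k * 6^j * (z+w) = 6^j * (6^k*z) + 6^k * (6^j*w) := by ring
  _ = _ := by rw [hz, hw]; push_cast; ring

lemma Aset_neg {z : ℂ} (hz : z ∈ Aset) : -z ∈ Aset := by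
  obtain ⟨m, n, k, hz⟩ := hz
  refine ⟨-m, -n, k, ?_⟩
  push_cast
  calc (6:ℂ)^k * (-z) = -(6^k*z) := by ring
  _ = _ := by rw [hz]; push_cast; ring

lemma Aset_mul {z w : ℂ} (hz : z ∈ Aset) (hw : w ∈ Aset) : z * w ∈ Aset := by
  obtain ⟨m, n, k, hz⟩ := hz
  obtain ⟨m', n', j, hw⟩ := hw
  refine ⟨m*m' - 3*(n*n'), m*n' + n*m', k+j, ?_⟩
  rw [pow_add]
  have : (6:ℂ)^k * 6^j * (z*w) = (6^k*z) * (6^j*w) := by ring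
  rw [this, hz, hw]
  push_cast
  ring_nf
  all_goals simp [Complex.I_sq, hs2]
  all_goals ring_nf

/-- `R({1, e^{iπ/6}, e^{iπ/3}, e^{iπ/2}})` is a subring of `ℂ`. -/
theorem stmt15 :
    ∃ A : Subring ℂ, (A : Set ℂ) =
      RU {1, Complex.exp ((Real.pi / 6 : ℂ) * Complex.I),
          Complex.exp ((Real.pi / 3 : ℂ) * Complex.I),
          Complex.exp ((Real.pi / 2 : ℂ) * Complex.I)} := by
  refine ⟨{
    carrier := RU {1, Complex.exp ((Real.pi / 6 : ℂ) * Complex.I),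
          Complex.exp ((Real.pi / 3 : ℂ) * Complex.I),
          Complex.exp ((Real.pi / 2 : ℂ) * Complex.I)}
    zero_mem' := by
      have h : (0:ℂ) ∈ Aset := Aset_zero
      rw [← RUorig_eq] at h; exact h
    one_mem' := by
      have h : (1:ℂ) ∈ Aset := Aset_one
      rw [← RUorig_eq] at h; exact h
    add_mem' := by
      intro a b ha hb
      have ha' : a ∈ Aset := by rw [← RUorig_eq]; exact ha
      have hb' : b ∈ Aset := by rw [← RUorig_eq]; exact hb
      have h : a + b ∈ Aset := Aset_add ha' hb'
      rw [← RUorig_eq] at h; exact h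
    mul_mem' := by
      intro a b ha hb
      have ha' : a ∈ Aset := by rw [← RUorig_eq]; exact ha
      have hb' : b ∈ Aset := by rw [← RUorig_eq]; exact hb
      have h : a * b ∈ Aset := Aset_mul ha' hb'
      rw [← RUorig_eq] at h; exact h
    neg_mem' := by
      intro a ha
      have ha' : a ∈ Aset := by rw [← RUorig_eq]; exact ha
      have h : -a ∈ Aset := Aset_neg ha'
      rw [← RUorig_eq] at h; exact h }, rfl⟩
end
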